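/- Let n be a positive even integer, e an integer with n < e < 3n/2, and l_1,…,l_n nonnegative integers with Σ_{i=1}^{n} l_i = n(e − n − 1); set Δ = 3n/2 − e, L_i = l_i + Δ, and F = (n/2)(3n/2 + 1). If there exists a feasible schedule for the two-machine unit-time open shop with time lags L_1,…,L_n whose total completion time satisfies Σ_{i=1}^{n} C_i ≤ F, then the PRN3DM instance (n, e, l_1,…,l_n) is a yes-instance: there exist a partition of {1,…,n} into two sets C and D each of size n/2 and bijections π_C : C → {1,…,n/2}, σ_C : C → {n/2+1,…,n}, π_D : D → {n/2+1,…,n}, σ_D : D → {1,…,n/2} such that π_C(i) + l_i + σ_C(i) = e for all i ∈ C and π_D(j) + l_j + σ_D(j) = e for all j ∈ D. -/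

import Mathlib

/-- The PRN3DM instance `(n, e, l)` is a yes-instance: there is a partition of
`{1,…,n}` into `A` and `B` of size `n/2` each, and bijections
`πA : A → {1,…,n/2}`, `σA : A → {n/2+1,…,n}`, `πB : B → {n/2+1,…,n}`,
`σB : B → {1,…,n/2}` with `πA i + l i + σA i = e` on `A` and
`πB i + l i + σB i = e` on `B`. -/
def PRN3DMYes (n e : ℕ) (l : ℕ → ℕ) : Prop :=
  ∃ (A B : Finset ℕ) (πA σA πB σB : ℕ → ℕ),
    Disjoint A B ∧ A ∪ B = Finset.Icc 1 n ∧
    A.card = n / 2 ∧ B.card = n / 2 ∧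
    Set.BijOn πA ↑A ↑(Finset.Icc 1 (n / 2)) ∧
    Set.BijOn σA ↑A ↑(Finset.Icc (n / 2 + 1) n) ∧
    Set.BijOn πB ↑B ↑(Finset.Icc (n / 2 + 1) n) ∧
    Set.BijOn σB ↑B ↑(Finset.Icc 1 (n / 2)) ∧
    (∀ i ∈ A, πA i + l i + σA i = e) ∧
    (∀ i ∈ B, πB i + l i + σB i = e)

/-- A feasible integer schedule for the two-machine unit-time open shop with
time lags `L` on jobs `{1,…,n}`: `s i m` is the start time of the operation of
job `i` on machine `m`; each machine processes at most one operation at a time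
(injectivity of start times on each machine), and the later operation of a job
starts at least `L i + 1` after the earlier one starts (i.e. at least `L i`
after the earlier operation completes). -/
def FeasibleSchedule (n : ℕ) (L : ℕ → ℕ) (s : ℕ → Fin 2 → ℕ) : Prop :=
  (∀ m : Fin 2, Set.InjOn (fun i => s i m) ↑(Finset.Icc 1 n)) ∧
  (∀ i ∈ Finset.Icc 1 n, s i 0 + L i + 1 ≤ s i 1 ∨ s i 1 + L i + 1 ≤ s i 0)

/-- The completion time `C i` of job `i`: its later unit-time operation's
start time plus one. -/
def completionTime (s : ℕ → Fin 2 → ℕ) (i : ℕ) : ℕ := max (s i 0) (s i 1) + 1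

lemma gauss_aux (m : ℕ) : 2 * ∑ x ∈ Finset.range m, x + m = m * m := by
  induction m with
  | zero => simp
  | succ p ih => rw [Finset.sum_range_succ]; nlinarith [ih]

lemma sum_Ico_le (c : ℕ) : ∀ (m : ℕ) (T : Finset ℕ), T.card = m → (∀ t ∈ T, c ≤ t) →
    ∑ x ∈ Finset.Ico c (c + m), x ≤ ∑ x ∈ T, x := by
  intro m
  induction m with
  | zero => intro T h _; simp
  | succ p ih =>
    intro T hcard hc
    have hne : T.Nonempty := Finset.card_pos.mp (by omega)
    have htT : T.max' hne ∈ T := T.max'_mem hne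
    set t := T.max' hne with ht
    have hsub : T ⊆ Finset.Icc c t :=
      fun x hx => Finset.mem_Icc.mpr ⟨hc x hx, T.le_max' x hx⟩
    have hcardle : p + 1 ≤ t + 1 - c := by
      have := Finset.card_le_card hsub
      simpa [Nat.card_Icc, hcard] using this
    have herase : (T.erase t).card = p := by rw [Finset.card_erase_of_mem htT, hcard]; omega
    have hih := ih (T.erase t) herase (fun x hx => hc x (Finset.mem_of_mem_erase hx))
    have hsumT : ∑ x ∈ T.erase t, x + t = ∑ x ∈ T, x := Finset.sum_erase_add T _ htT
    rw [show c + (p + 1) = (c + p) + 1 from rfl, Finset.sum_Ico_succ_top (by omega)]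
    omega

lemma eq_Ico_of_sum_le (c m : ℕ) (T : Finset ℕ) (hcard : T.card = m)
    (hc : ∀ t ∈ T, c ≤ t) (hle : ∑ x ∈ T, x ≤ ∑ x ∈ Finset.Ico c (c + m), x) :
    T = Finset.Ico c (c + m) := by
  apply Finset.eq_of_subset_of_card_le
  · intro t ht
    rw [Finset.mem_Ico]
    refine ⟨hc t ht, ?_⟩
    by_contra hlt
    push_neg at hlt
    have hm : 1 ≤ m := by
      have : 0 < T.card := Finset.card_pos.mpr ⟨t, ht⟩
      omega
    obtain ⟨p, rfl⟩ : ∃ p, m = p + 1 := ⟨m - 1, by omega⟩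
    have herase : (T.erase t).card = p := by rw [Finset.card_erase_of_mem ht, hcard]; omega
    have hih := sum_Ico_le c p (T.erase t) herase
      (fun x hx => hc x (Finset.mem_of_mem_erase hx))
    have hsumT : ∑ x ∈ T.erase t, x + t = ∑ x ∈ T, x := Finset.sum_erase_add T _ ht
    rw [show c + (p + 1) = (c + p) + 1 from rfl, Finset.sum_Ico_succ_top (by omega)] at hle
    omega
  · simp [Nat.card_Ico, hcard]

lemma bijOn_of_image {f : ℕ → ℕ} {T S : Finset ℕ} (himg : T.image f = S)
    (hinj : Set.InjOn f ↑T) : Set.BijOn f ↑T ↑S := by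
  have h : (S : Set ℕ) = f '' ↑T := by rw [← himg, Finset.coe_image]
  rw [h]
  exact hinj.bijOn_image

lemma bijOn_succ (k : ℕ) : Set.BijOn (fun x => x + 1) ↑(Finset.range k) ↑(Finset.Icc 1 k) := by
  refine ⟨?_, ?_, ?_⟩
  · intro x hx; simp at hx ⊢; omega
  · intro x _ y _ h; simp only [] at h; omega
  · intro y hy; simp at hy ⊢; exact ⟨y - 1, by omega, by omega⟩

lemma bijOn_sub (k : ℕ) :
    Set.BijOn (fun x => 3 * k - x) ↑(Finset.Ico k (2 * k)) ↑(Finset.Icc (k + 1) (2 * k)) := by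
  refine ⟨?_, ?_, ?_⟩
  · intro x hx; simp at hx ⊢; omega
  · intro x hx y hy h; simp at hx hy h ⊢; omega
  · intro y hy; simp at hy ⊢; exact ⟨3 * k - y, by omega, by omega⟩

lemma sum_range_le (m : ℕ) (T : Finset ℕ) (hcard : T.card = m) :
    ∑ x ∈ Finset.range m, x ≤ ∑ x ∈ T, x := by
  have := sum_Ico_le 0 m T hcard (fun t _ => Nat.zero_le t)
  simpa using this

lemma eq_of_sq (a b k : ℤ) (h1 : a + b = 2*k) (h2 : a*a + b*b ≤ 2*(k*k)) : a = k := by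
  have hb : b = 2*k - a := by omega
  subst hb
  nlinarith [sq_nonneg (a - k)]

lemma eqA_aux (x0 x1 li D n e m : ℕ) (hj : x1 = x0 + (li + D) + 1)
    (hD : D = 3 * n / 2 - e) (hk' : n = 2 * (m + 1)) (h2 : e < 3 * n / 2)
    (hlo : m + 1 ≤ x1) (hhi : x1 < 2 * (m + 1)) :
    x0 + 1 + li + (3 * (m + 1) - x1) = e := by omega

lemma eqB_aux (x0 x1 li D n e m : ℕ) (hj : x0 = x1 + (li + D) + 1)
    (hD : D = 3 * n / 2 - e) (hk' : n = 2 * (m + 1)) (h2 : e < 3 * n / 2)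
    (hlo : m + 1 ≤ x0) (hhi : x0 < 2 * (m + 1)) :
    (3 * (m + 1) - x0) + li + (x1 + 1) = e := by omega

/-- If there is a feasible schedule with total completion time at most
`F = (n/2) * (3n/2 + 1)`, then the PRN3DM instance is a yes-instance. -/
theorem stmt_5 (n e : ℕ) (l : ℕ → ℕ) (hn : 0 < n) (hne : Even n)
    (h1 : n < e) (h2 : e < 3 * n / 2)
    (hsum : ∑ i ∈ Finset.Icc 1 n, l i = n * (e - n - 1))
    (hsched : ∃ s : ℕ → Fin 2 → ℕ,
      FeasibleSchedule n (fun i => l i + (3 * n / 2 - e)) s ∧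
      ∑ i ∈ Finset.Icc 1 n, completionTime s i ≤ n / 2 * (3 * n / 2 + 1)) :
    PRN3DMYes n e l := by
  obtain ⟨s, hfs, hF⟩ := hsched
  obtain ⟨hinj, hlag⟩ := hfs
  obtain ⟨k', hk'⟩ : ∃ k, n = 2 * k := by obtain ⟨r, hr⟩ := hne; exact ⟨r, by omega⟩
  obtain ⟨m, rfl⟩ : ∃ m, k' = m + 1 := ⟨k' - 1, by omega⟩
  have hkd : n / 2 = m + 1 := by omega
  have h3k : 3 * n / 2 = 3 * (m + 1) := by omega
  have he3 : e < 3 * (m + 1) := by omega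
  -- notation
  set D := 3 * n / 2 - e with hD
  set J := Finset.Icc 1 n with hJ
  set A := J.filter (fun i => s i 0 < s i 1) with hAdef
  set B := J.filter (fun i => s i 1 < s i 0) with hBdef
  have hAJ : A ⊆ J := Finset.filter_subset _ _
  have hBJ : B ⊆ J := Finset.filter_subset _ _
  have hUnion : A ∪ B = J := by
    apply Finset.Subset.antisymm (Finset.union_subset hAJ hBJ)
    intro i hi
    rcases lt_trichotomy (s i 0) (s i 1) with h | h | h
    · exact Finset.mem_union_left _ (Finset.mem_filter.mpr ⟨hi, h⟩)
    · exfalso; rcases hlag i hi with h' | h' <;>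
        (have h'' : s i 0 + (l i + D) + 1 ≤ s i 1 ∨ s i 1 + (l i + D) + 1 ≤ s i 0 :=
          by first | exact Or.inl h' | exact Or.inr h') <;> omega
    · exact Finset.mem_union_right _ (Finset.mem_filter.mpr ⟨hi, h⟩)
  have hDisj : Disjoint A B := by
    rw [Finset.disjoint_left]
    intro i hiA hiB
    have h1 := (Finset.mem_filter.mp hiA).2
    have h2 := (Finset.mem_filter.mp hiB).2
    omega
  have hlagA : ∀ i ∈ A, s i 0 + (l i + D) + 1 ≤ s i 1 := by
    intro i hi
    have hlt := (Finset.mem_filter.mp hi).2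
    rcases hlag i (hAJ hi) with h | h
    · exact h
    · have h' : s i 1 + (l i + D) + 1 ≤ s i 0 := h
      omega
  have hlagB : ∀ i ∈ B, s i 1 + (l i + D) + 1 ≤ s i 0 := by
    intro i hi
    have hlt := (Finset.mem_filter.mp hi).2
    rcases hlag i (hBJ hi) with h | h
    · have h' : s i 0 + (l i + D) + 1 ≤ s i 1 := h
      omega
    · exact h
  have hAlt : ∀ i ∈ A, s i 0 < s i 1 := fun i hi => (Finset.mem_filter.mp hi).2
  have hBlt : ∀ i ∈ B, s i 1 < s i 0 := fun i hi => (Finset.mem_filter.mp hi).2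
  clear_value D J A B
  obtain ⟨a, ha⟩ : ∃ x, x = A.card := ⟨_, rfl⟩
  obtain ⟨b, hb⟩ : ∃ x, x = B.card := ⟨_, rfl⟩
  have hab : a + b = n := by
    rw [ha, hb, ← Finset.card_union_of_disjoint hDisj, hUnion, hJ, Nat.card_Icc]
    omega
  obtain ⟨S0A, hS0Ad⟩ : ∃ x, x = ∑ i ∈ A, s i 0 := ⟨_, rfl⟩
  obtain ⟨S1A, hS1Ad⟩ : ∃ x, x = ∑ i ∈ A, s i 1 := ⟨_, rfl⟩
  obtain ⟨S0B, hS0Bd⟩ : ∃ x, x = ∑ i ∈ B, s i 0 := ⟨_, rfl⟩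
  obtain ⟨S1B, hS1Bd⟩ : ∃ x, x = ∑ i ∈ B, s i 1 := ⟨_, rfl⟩
  obtain ⟨SLA, hSLAd⟩ : ∃ x, x = ∑ i ∈ A, (l i + D) := ⟨_, rfl⟩
  obtain ⟨SLB, hSLBd⟩ : ∃ x, x = ∑ i ∈ B, (l i + D) := ⟨_, rfl⟩
  obtain ⟨g, hg⟩ : ∃ x, x = ∑ x ∈ Finset.range (m + 1), x := ⟨_, rfl⟩
  -- total completion time split
  have hsplit : ∑ i ∈ J, completionTime s i = S1A + a + (S0B + b) := by
    rw [hS1Ad, hS0Bd, ha, hb, ← hUnion, Finset.sum_union hDisj]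
    congr 1
    · have e1 : ∑ i ∈ A, completionTime s i = ∑ i ∈ A, (s i 1 + 1) :=
        Finset.sum_congr rfl (fun i hi => by
          simp [completionTime, Nat.max_eq_right (le_of_lt (hAlt i hi))])
      rw [e1, Finset.sum_add_distrib, Finset.sum_const, smul_eq_mul, mul_one]
    · have e1 : ∑ i ∈ B, completionTime s i = ∑ i ∈ B, (s i 0 + 1) :=
        Finset.sum_congr rfl (fun i hi => by
          simp [completionTime, Nat.max_eq_left (le_of_lt (hBlt i hi))])
      rw [e1, Finset.sum_add_distrib, Finset.sum_const, smul_eq_mul, mul_one]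
  have hga : 2 * g + (m + 1) = (m + 1) * (m + 1) := by rw [hg]; exact gauss_aux (m + 1)
  have hF6 : (m + 1) * (3 * (m + 1) + 1) = 6 * g + 4 * (m + 1) := by nlinarith only [hga]
  have hFtot : S1A + S0B + n ≤ 6 * g + 4 * (m + 1) := by
    have h := hF
    rw [hsplit, hkd, h3k, hF6] at h
    omega
  -- sum of lags
  have hSL : SLA + SLB = 4 * g := by
    have h0 : SLA + SLB = ∑ i ∈ J, (l i + D) := by
      rw [hSLAd, hSLBd, ← Finset.sum_union hDisj, hUnion]
    have hcardJ : J.card = n := by rw [hJ, Nat.card_Icc]; omega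
    have h1' : ∑ i ∈ J, (l i + D) = n * (e - n - 1) + n * D := by
      rw [Finset.sum_add_distrib, hsum, Finset.sum_const, smul_eq_mul, hcardJ]
    have h2' : (e - n - 1) + D = m := by omega
    have h3' : n * (e - n - 1) + n * D = n * m := by rw [← Nat.left_distrib, h2']
    have h4' : n * m = 4 * g := by
      rw [hk']
      nlinarith only [hga]
    omega
  -- injectivity helpers
  have hinj0 : Set.InjOn (fun i => s i 0) ↑A := fun x hx y hy h =>
    hinj 0 (Finset.mem_coe.mpr (hAJ hx)) (Finset.mem_coe.mpr (hAJ hy)) h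
  have hinj1A : Set.InjOn (fun i => s i 1) ↑A := fun x hx y hy h =>
    hinj 1 (Finset.mem_coe.mpr (hAJ hx)) (Finset.mem_coe.mpr (hAJ hy)) h
  have hinj1 : Set.InjOn (fun i => s i 1) ↑B := fun x hx y hy h =>
    hinj 1 (Finset.mem_coe.mpr (hBJ hx)) (Finset.mem_coe.mpr (hBJ hy)) h
  have hinj0B : Set.InjOn (fun i => s i 0) ↑B := fun x hx y hy h =>
    hinj 0 (Finset.mem_coe.mpr (hBJ hx)) (Finset.mem_coe.mpr (hBJ hy)) h
  -- images
  obtain ⟨T0A, hT0Ad⟩ : ∃ x, x = A.image (fun i => s i 0) := ⟨_, rfl⟩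
  obtain ⟨T1B, hT1Bd⟩ : ∃ x, x = B.image (fun i => s i 1) := ⟨_, rfl⟩
  have hcard0A : T0A.card = a := by
    rw [hT0Ad, ha]; exact Finset.card_image_of_injOn hinj0
  have hcard1B : T1B.card = b := by
    rw [hT1Bd, hb]; exact Finset.card_image_of_injOn hinj1
  have hsum0A : ∑ x ∈ T0A, x = S0A := by
    rw [hT0Ad, hS0Ad]; exact Finset.sum_image (fun x hx y hy h => hinj0 hx hy h)
  have hsum1B : ∑ x ∈ T1B, x = S1B := by
    rw [hT1Bd, hS1Bd]; exact Finset.sum_image (fun x hx y hy h => hinj1 hx hy h)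
  have hL0A : ∑ x ∈ Finset.range a, x ≤ S0A := by
    have := sum_range_le a T0A hcard0A
    omega
  have hL1B : ∑ x ∈ Finset.range b, x ≤ S1B := by
    have := sum_range_le b T1B hcard1B
    omega
  -- per-group lag inequalities
  have i1 : S0A + SLA + a ≤ S1A := by
    have h := Finset.sum_le_sum hlagA
    rw [Finset.sum_add_distrib, Finset.sum_add_distrib, Finset.sum_const, smul_eq_mul,
      mul_one] at h
    rw [hS0Ad, hSLAd, ha, hS1Ad]
    exact h
  have i2 : S1B + SLB + b ≤ S0B := by
    have h := Finset.sum_le_sum hlagB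
    rw [Finset.sum_add_distrib, Finset.sum_add_distrib, Finset.sum_const, smul_eq_mul,
      mul_one] at h
    rw [hS1Bd, hSLBd, hb, hS0Bd]
    exact h
  -- card A = card B = m+1
  have hq : a * a + b * b ≤ 2 * ((m + 1) * (m + 1)) := by
    have g1 := gauss_aux a
    have g2 := gauss_aux b
    nlinarith only [g1, g2, hga, hL0A, hL1B, i1, i2, hFtot, hSL, hab, hk']
  have hak : a = m + 1 := by
    have hz : (a : ℤ) = (m : ℤ) + 1 := by
      have e1 : (a : ℤ) + b = 2 * ((m : ℤ) + 1) := by exact_mod_cast by omega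
      have e2 : (a : ℤ) * a + b * b ≤ 2 * (((m : ℤ) + 1) * ((m : ℤ) + 1)) := by
        exact_mod_cast hq
      exact eq_of_sq _ _ _ e1 e2
    exact_mod_cast hz
  have hbk : b = m + 1 := by omega
  -- forced equalities (stage 1)
  have hL0A' : g ≤ S0A := by rw [hak] at hL0A; rw [hg]; exact hL0A
  have hL1B' : g ≤ S1B := by rw [hbk] at hL1B; rw [hg]; exact hL1B
  have hS0Ag : S0A = g := by omega
  have hS1Bg : S1B = g := by omega
  have hE1 : S1A = S0A + SLA + (m + 1) := by omega
  have hE2 : S0B = S1B + SLB + (m + 1) := by omega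
  -- images of earlier operations
  have hz1 : 0 + (m + 1) = m + 1 := Nat.zero_add _
  have himg0A : T0A = Finset.range (m + 1) := by
    have h := eq_Ico_of_sum_le 0 (m + 1) T0A (by omega) (fun t _ => Nat.zero_le t)
      (le_of_eq (by rw [hsum0A, hS0Ag, hg, Finset.range_eq_Ico, hz1]))
    rw [Finset.range_eq_Ico, ← hz1]
    exact h
  have himg1B : T1B = Finset.range (m + 1) := by
    have h := eq_Ico_of_sum_le 0 (m + 1) T1B (by omega) (fun t _ => Nat.zero_le t)
      (le_of_eq (by rw [hsum1B, hS1Bg, hg, Finset.range_eq_Ico, hz1]))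
    rw [Finset.range_eq_Ico, ← hz1]
    exact h
  -- per-job equalities
  have hjobA : ∀ i ∈ A, s i 1 = s i 0 + (l i + D) + 1 := by
    have hsum_eq : ∑ i ∈ A, (s i 0 + (l i + D) + 1) = ∑ i ∈ A, s i 1 := by
      rw [Finset.sum_add_distrib, Finset.sum_add_distrib, Finset.sum_const, smul_eq_mul,
        mul_one]
      omega
    intro i hi
    exact ((Finset.sum_eq_sum_iff_of_le hlagA).mp hsum_eq i hi).symm
  have hjobB : ∀ i ∈ B, s i 0 = s i 1 + (l i + D) + 1 := by
    have hsum_eq : ∑ i ∈ B, (s i 1 + (l i + D) + 1) = ∑ i ∈ B, s i 0 := by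
      rw [Finset.sum_add_distrib, Finset.sum_add_distrib, Finset.sum_const, smul_eq_mul,
        mul_one]
      omega
    intro i hi
    exact ((Finset.sum_eq_sum_iff_of_le hlagB).mp hsum_eq i hi).symm
  -- later operations are ≥ m+1
  have hA1ge : ∀ i ∈ A, m + 1 ≤ s i 1 := by
    intro i hi
    by_contra h
    push_neg at h
    have hmem : s i 1 ∈ T1B := by rw [himg1B]; exact Finset.mem_range.mpr h
    rw [hT1Bd] at hmem
    obtain ⟨j, hj, hji⟩ := Finset.mem_image.mp hmem
    have hji' : j = i := hinj 1 (Finset.mem_coe.mpr (hBJ hj)) (Finset.mem_coe.mpr (hAJ hi)) hji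
    exact Finset.disjoint_left.mp hDisj hi (hji' ▸ hj)
  have hB0ge : ∀ i ∈ B, m + 1 ≤ s i 0 := by
    intro i hi
    by_contra h
    push_neg at h
    have hmem : s i 0 ∈ T0A := by rw [himg0A]; exact Finset.mem_range.mpr h
    rw [hT0Ad] at hmem
    obtain ⟨j, hj, hji⟩ := Finset.mem_image.mp hmem
    have hji' : j = i := hinj 0 (Finset.mem_coe.mpr (hAJ hj)) (Finset.mem_coe.mpr (hBJ hi)) hji
    exact Finset.disjoint_left.mp hDisj hj (hji'.symm ▸ hi)
  -- images of later operations
  obtain ⟨T1A, hT1Ad⟩ : ∃ x, x = A.image (fun i => s i 1) := ⟨_, rfl⟩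
  obtain ⟨T0B, hT0Bd⟩ : ∃ x, x = B.image (fun i => s i 0) := ⟨_, rfl⟩
  have hcard1A : T1A.card = m + 1 := by
    rw [hT1Ad, Finset.card_image_of_injOn hinj1A]; omega
  have hcard0B : T0B.card = m + 1 := by
    rw [hT0Bd, Finset.card_image_of_injOn hinj0B]; omega
  have hsum1A : ∑ x ∈ T1A, x = S1A := by
    rw [hT1Ad, hS1Ad]; exact Finset.sum_image (fun x hx y hy h => hinj1A hx hy h)
  have hsum0B : ∑ x ∈ T0B, x = S0B := by
    rw [hT0Bd, hS0Bd]; exact Finset.sum_image (fun x hx y hy h => hinj0B hx hy h)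
  have hge1A : ∀ t ∈ T1A, m + 1 ≤ t := by
    intro t ht
    rw [hT1Ad] at ht
    obtain ⟨i, hi, rfl⟩ := Finset.mem_image.mp ht
    exact hA1ge i hi
  have hge0B : ∀ t ∈ T0B, m + 1 ≤ t := by
    intro t ht
    rw [hT0Bd] at ht
    obtain ⟨i, hi, rfl⟩ := Finset.mem_image.mp ht
    exact hB0ge i hi
  have hIcoSum : ∑ x ∈ Finset.Ico (m + 1) ((m + 1) + (m + 1)), x = 3 * g + (m + 1) := by
    rw [Finset.sum_Ico_eq_sum_range]
    have : (m + 1) + (m + 1) - (m + 1) = m + 1 := by omega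
    rw [this, Finset.sum_add_distrib, Finset.sum_const, smul_eq_mul, Finset.card_range, ← hg]
    nlinarith only [hga]
  have hlow1A : 3 * g + (m + 1) ≤ S1A := by
    have h := sum_Ico_le (m + 1) (m + 1) T1A hcard1A hge1A
    rw [hIcoSum, hsum1A] at h
    exact h
  have hlow0B : 3 * g + (m + 1) ≤ S0B := by
    have h := sum_Ico_le (m + 1) (m + 1) T0B hcard0B hge0B
    rw [hIcoSum, hsum0B] at h
    exact h
  have himg1A : T1A = Finset.Ico (m + 1) (2 * (m + 1)) := by
    have h := eq_Ico_of_sum_le (m + 1) (m + 1) T1A hcard1A hge1A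
      (by rw [hsum1A, hIcoSum]; omega)
    rw [show (m + 1) + (m + 1) = 2 * (m + 1) by ring] at h
    exact h
  have himg0B : T0B = Finset.Ico (m + 1) (2 * (m + 1)) := by
    have h := eq_Ico_of_sum_le (m + 1) (m + 1) T0B hcard0B hge0B
      (by rw [hsum0B, hIcoSum]; omega)
    rw [show (m + 1) + (m + 1) = 2 * (m + 1) by ring] at h
    exact h
  -- construct the witnesses
  refine ⟨A, B, (fun i => s i 0 + 1), (fun i => 3 * (m + 1) - s i 1),
    (fun i => 3 * (m + 1) - s i 0), (fun i => s i 1 + 1),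
    hDisj, hJ ▸ hUnion, by omega, by omega, ?_, ?_, ?_, ?_, ?_, ?_⟩
  · rw [hkd]
    have := (bijOn_succ (m + 1)).comp (bijOn_of_image (by rw [hT0Ad] at himg0A; exact himg0A) hinj0)
    simpa [Function.comp_def] using this
  · rw [hkd, hk']
    have := (bijOn_sub (m + 1)).comp (bijOn_of_image (by rw [hT1Ad] at himg1A; exact himg1A) hinj1A)
    simpa [Function.comp_def] using this
  · rw [hkd, hk']
    have := (bijOn_sub (m + 1)).comp (bijOn_of_image (by rw [hT0Bd] at himg0B; exact himg0B) hinj0B)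
    simpa [Function.comp_def] using this
  · rw [hkd]
    have := (bijOn_succ (m + 1)).comp (bijOn_of_image (by rw [hT1Bd] at himg1B; exact himg1B) hinj1)
    simpa [Function.comp_def] using this
  · intro i hi
    have hj := hjobA i hi
    have hmem : s i 1 ∈ Finset.Ico (m + 1) (2 * (m + 1)) := by
      rw [← himg1A, hT1Ad]; exact Finset.mem_image_of_mem _ hi
    have hb' := Finset.mem_Ico.mp hmem
    exact eqA_aux _ _ _ _ _ _ _ hj hD hk' h2 hb'.1 hb'.2
  · intro i hi
    have hj := hjobB i hi
    have hmem : s i 0 ∈ Finset.Ico (m + 1) (2 * (m + 1)) := by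
      rw [← himg0B, hT0Bd]; exact Finset.mem_image_of_mem _ hi
    have hb' := Finset.mem_Ico.mp hmem
    exact eqB_aux _ _ _ _ _ _ _ hj hD hk' h2 hb'.1 hb'.2
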